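/- Every central word over the alphabet {a,b} is a palindrome. -/

import Mathlib

/-!
Alphabet `{a, b}` is modelled by `Bool`, with `false` playing the role of the
letter `a` and `true` the role of the letter `b`.
-/

/-- A finite word over `{a, b}` is balanced if any two factors of equal length
have numbers of occurrences of the letter `a` differing by at most `1`. -/
def BalancedList (w : List Bool) : Prop :=
  ∀ u v : List Bool, u <:+: w → v <:+: w → u.length = v.length →
    |(u.count false : ℤ) - (v.count false : ℤ)| ≤ 1

/-- A finite word `w` is central if both `awb` and `bwa` are balanced. -/
def IsCentral (w : List Bool) : Prop :=
  BalancedList (false :: (w ++ [true])) ∧ BalancedList (true :: (w ++ [false]))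

private lemma getElem_congr' (l : List Bool) (i j : ℕ) (h : i = j) (hi : i < l.length) :
    l[i] = l[j]'(h ▸ hi) := by subst h; rfl

private lemma central_aux (w p : List Bool) (x : Bool)
    (hw1 : (p ++ [x]) <+: w) (hw2 : ((!x) :: p.reverse) <:+ w)
    (hb : BalancedList (x :: (w ++ [!x]))) : False := by
  obtain ⟨t, ht⟩ := hw1
  obtain ⟨s, hs⟩ := hw2
  set u : List Bool := x :: (p ++ [x]) with hu
  set v : List Bool := ((!x) :: p.reverse) ++ [!x] with hv
  have hui : u <:+: (x :: (w ++ [!x])) := by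
    refine ⟨[], t ++ [!x], ?_⟩
    simp [hu, ← ht]
  have hvi : v <:+: (x :: (w ++ [!x])) := by
    refine ⟨x :: s, [], ?_⟩
    simp [hv, ← hs]
  have hlen : u.length = v.length := by simp [hu, hv]
  have := hb u v hui hvi hlen
  rw [abs_le] at this
  cases x <;> simp [hu, hv, List.count_cons, List.count_append, List.count_reverse] at this <;>
    omega

/-- Every central word over the alphabet `{a, b}` is a palindrome. -/
theorem central_isPalindrome (w : List Bool) (h : IsCentral w) :
    w.reverse = w := by
  by_contra hne
  set n := w.length with hn
  have hex : ∃ i : ℕ, w.reverse[i]? ≠ w[i]? := by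
    by_contra hc
    push_neg at hc
    exact hne (List.ext_getElem? hc)
  classical
  let i := Nat.find hex
  have hi : w.reverse[i]? ≠ w[i]? := Nat.find_spec hex
  have hmin : ∀ j < i, w.reverse[j]? = w[j]? := fun j hj => by
    have := Nat.find_min hex hj
    simpa using this
  have hiltn : i < n := by
    by_contra hc
    push_neg at hc
    apply hi
    rw [List.getElem?_eq_none (by simpa using hc), List.getElem?_eq_none (by simpa using hc)]
  have hrev : ∀ j (hj : j < n), w.reverse[j]? = some (w[n - 1 - j]'(by omega)) := by
    intro j hj
    rw [List.getElem?_eq_getElem (by simpa using hj)]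
    exact congrArg some (List.getElem_reverse ..)
  -- translate mismatch and minimality to statements about w
  have hne' : w[n - 1 - i]'(by omega) ≠ w[i]'hiltn := by
    intro hc
    apply hi
    rw [hrev i hiltn, List.getElem?_eq_getElem hiltn, hc]
  have heq : ∀ j (hj : j < i), w[j]'(by omega) = w[n - 1 - j]'(by omega) := by
    intro j hj
    have h1 := hmin j hj
    rw [hrev j (by omega), List.getElem?_eq_getElem (by omega : j < w.length)] at h1
    exact (Option.some_injective _ h1).symm
  -- i is in the strict first half
  have hhalf : i < n - 1 - i := by
    rcases Nat.lt_trichotomy i (n - 1 - i) with h1 | h1 | h1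
    · exact h1
    · exact absurd (getElem_congr' w _ _ h1.symm (by omega)) hne'
    · have h2 := heq (n - 1 - i) h1
      have h3 : n - 1 - (n - 1 - i) = i := by omega
      have h4 := getElem_congr' w _ _ h3 (by omega)
      exact absurd (h2.trans h4) hne'
  set p : List Bool := w.take i with hp
  set x : Bool := w[i]'hiltn with hx
  have hxw : w[n - 1 - i]'(by omega) = !x := by
    cases hxx : x <;> cases hyy : w[n - 1 - i]'(by omega) <;> simp_all
  -- prefix fact
  have hw1 : (p ++ [x]) <+: w := by
    have : w.take (i + 1) = p ++ [x] := by
      rw [List.take_succ, List.getElem?_eq_getElem hiltn]; rfl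
    rw [← this]; exact List.take_prefix _ _
  -- suffix fact
  have hdrop2 : w.drop (n - i) = p.reverse := by
    apply List.ext_getElem
    · simp [hp]; omega
    · intro k hk1 hk2
      have hki : k < i := by simp [hp, hn] at hk2; omega
      rw [List.getElem_drop]
      rw [List.getElem_reverse]
      have hlp : p.length = i := by simp [hp]; omega
      have h5 : p[p.length - 1 - k]'(by omega) = w[i - 1 - k]'(by omega) := by
        simp [hp, hlp, List.getElem_take, Nat.min_eq_left (show i ≤ w.length by omega)]
      rw [h5]
      have h6 := heq (i - 1 - k) (by omega)
      have h7 : n - 1 - (i - 1 - k) = n - i + k := by omega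
      exact (h6.trans (getElem_congr' w _ _ h7 (by omega))).symm
  have hw2 : ((!x) :: p.reverse) <:+ w := by
    have hd : w.drop (n - 1 - i) = (!x) :: p.reverse := by
      have h8 : w.drop (n - 1 - i) = w[n - 1 - i]'(by omega) :: w.drop (n - 1 - i + 1) :=
        List.drop_eq_getElem_cons (by omega)
      have h9 : n - 1 - i + 1 = n - i := by omega
      rw [h8, h9, hdrop2, hxw]
    rw [← hd]; exact List.drop_suffix _ _
  have hb : BalancedList (x :: (w ++ [!x])) := by
    clear_value x
    cases x
    · simpa using h.1
    · simpa using h.2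
  exact central_aux w p x hw1 hw2 hb
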